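/- Let 0 ≤ λ ≤ μ and let u = (u₀,u₁,u₂,u₃,u₄) ∈ ℝ⁵ with u₀² + u₁² + u₂² + u₃² + u₄² = 1. Define nonnegative reals f₊, f₋ by f₊² + f₋² = ½(λ² + μ² - λ²(u₁² + u₂²) - μ²(u₃² + u₄²)) and f₊² - f₋² = λμ·u₀. Then f₊ = ½·√((λ + μu₀)² + (μ² - λ²)(u₁² + u₂²)) and f₋ = ½·√((λ - μu₀)² + (μ² - λ²)(u₁² + u₂²)). -/
import Mathlib

/-!
STATEMENT 17: For 0 ≤ lam ≤ mu and u ∈ S⁴ ⊂ ℝ⁵, if f₊, f₋ ≥ 0 satisfy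
f₊² + f₋² = ½(λ² + μ² - λ²(u₁²+u₂²) - μ²(u₃²+u₄²)) and f₊² - f₋² = λμ·u₀, then
f₊ = ½√((λ+μu₀)² + (μ²-λ²)(u₁²+u₂²)) and f₋ = ½√((λ-μu₀)² + (μ²-λ²)(u₁²+u₂²)).
-/

open scoped BigOperators

theorem stmt17 (lam mu : ℝ) (h0 : 0 ≤ lam) (hlm : lam ≤ mu)
    (u : Fin 5 → ℝ) (hu : ∑ i : Fin 5, (u i)^2 = 1)
    (fp fm : ℝ) (hfp : 0 ≤ fp) (hfm : 0 ≤ fm)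
    (h1 : fp^2 + fm^2
      = (lam^2 + mu^2 - lam^2*((u 1)^2 + (u 2)^2) - mu^2*((u 3)^2 + (u 4)^2)) / 2)
    (h2 : fp^2 - fm^2 = lam * mu * u 0) :
    fp = Real.sqrt ((lam + mu * u 0)^2 + (mu^2 - lam^2)*((u 1)^2 + (u 2)^2)) / 2 ∧
    fm = Real.sqrt ((lam - mu * u 0)^2 + (mu^2 - lam^2)*((u 1)^2 + (u 2)^2)) / 2 := by
  rw [Fin.sum_univ_five] at hu
  have ep : (lam + mu * u 0)^2 + (mu^2 - lam^2)*((u 1)^2 + (u 2)^2) = (2*fp)^2 := by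
    nlinarith [sq_nonneg (u 0), sq_nonneg (u 3)]
  have em : (lam - mu * u 0)^2 + (mu^2 - lam^2)*((u 1)^2 + (u 2)^2) = (2*fm)^2 := by
    nlinarith [sq_nonneg (u 0), sq_nonneg (u 3)]
  constructor
  · rw [ep, Real.sqrt_sq (by linarith)]; ring
  · rw [em, Real.sqrt_sq (by linarith)]; ring
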